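/- If a hypergraph with hyperedges E_1,…,E_n has the running intersection property with respect to the ordering E_1,…,E_n, and marginal probability distributions P_{E_i} are given on each E_i that are pairwise consistent (their marginals on intersections agree), then there exists a joint probability distribution P on E_1 ∪ … ∪ E_n whose marginal on each E_i equals P_{E_i}. -/

import Mathlib

open Finset

variable {ι V : Type} [DecidableEq ι] [Fintype V] [DecidableEq V]

/-- Restriction of an assignment of values on `S` to a subset `T ⊆ S`. -/
def restr {S T : Finset ι} (h : T ⊆ S) (w : ↥S → V) : ↥T → V :=
  fun i => w ⟨i.1, h i.2⟩

/-- Marginal of a distribution on the variables in `S` to the variables in `T ⊆ S`. -/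
noncomputable def marg {S T : Finset ι} (p : (↥S → V) → ℝ) (h : T ⊆ S) :
    (↥T → V) → ℝ :=
  fun z => ∑ w : ↥S → V, if restr h w = z then p w else 0

/-- Glue an assignment on `T` with an assignment on `S \ T` to one on `S`. -/
def glue {S T : Finset ι} (h : T ⊆ S) (z : ↥T → V) (u : ↥(S \ T) → V) : ↥S → V :=
  fun i => if hi : i.1 ∈ T then z ⟨i.1, hi⟩ else u ⟨i.1, Finset.mem_sdiff.2 ⟨i.2, hi⟩⟩

lemma restr_refl {T : Finset ι} (z : ↥T → V) : restr (Finset.Subset.refl T) z = z := rfl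

lemma restr_glue_subset {S T T' : Finset ι} (h : T ⊆ S) (h' : T' ⊆ T) (h'' : T' ⊆ S)
    (z : ↥T → V) (u : ↥(S \ T) → V) :
    restr h'' (glue h z u) = restr h' z := by
  funext x
  simp [restr, glue, h' x.2]

def glue_equiv_aux {S T : Finset ι} (h : T ⊆ S) :
    (↥S → V) ≃ (↥T → V) × (↥(S \ T) → V) where
  toFun w := (restr h w, restr Finset.sdiff_subset w)
  invFun x := glue h x.1 x.2
  left_inv w := by
    funext x
    by_cases hx : x.1 ∈ T <;> simp [glue, restr, hx]
  right_inv x := by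
    refine Prod.ext ?_ ?_
    · funext i
      simp [restr, glue, i.2]
    · funext i
      simp [restr, glue, (Finset.mem_sdiff.1 i.2).2]

lemma marg_eq_sum_glue {S T : Finset ι} (h : T ⊆ S) (p : (↥S → V) → ℝ) (z : ↥T → V) :
    marg p h z = ∑ u : ↥(S \ T) → V, p (glue h z u) := by
  classical
  rw [marg, ← Equiv.sum_comp (glue_equiv_aux (V := V) h).symm
    (fun w => if restr h w = z then p w else 0)]
  rw [Fintype.sum_prod_type]
  have hre : ∀ (t : ↥T → V) (u : ↥(S \ T) → V), restr h (glue h t u) = t := by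
    intro t u
    rw [restr_glue_subset h (Finset.Subset.refl T) h, restr_refl]
  simp only [glue_equiv_aux, Equiv.coe_fn_symm_mk, hre]
  rw [Finset.sum_comm]
  simp

lemma sum_marg {S T : Finset ι} (h : T ⊆ S) (p : (↥S → V) → ℝ) :
    ∑ z, marg p h z = ∑ w, p w := by
  unfold marg
  rw [Finset.sum_comm]
  simp

lemma marg_nonneg {S T : Finset ι} (h : T ⊆ S) {p : (↥S → V) → ℝ}
    (hp : ∀ w, 0 ≤ p w) (z : ↥T → V) : 0 ≤ marg p h z := by
  unfold marg
  apply Finset.sum_nonneg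
  intro w _
  split <;> simp [hp w]

lemma le_marg {S T : Finset ι} (h : T ⊆ S) (p : (↥S → V) → ℝ)
    (hp : ∀ w, 0 ≤ p w) (w : ↥S → V) : p w ≤ marg p h (restr h w) := by
  unfold marg
  have := Finset.single_le_sum (f := fun w' : ↥S → V => if restr h w' = restr h w then p w' else 0)
    (fun i _ => by split <;> simp [hp i]) (Finset.mem_univ w)
  simpa using this

lemma marg_comp {S T T' : Finset ι} (h1 : T ⊆ S) (h2 : T' ⊆ T) (p : (↥S → V) → ℝ) :
    marg (marg p h1) h2 = marg p (h2.trans h1) := by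
  funext z
  unfold marg
  have key : ∀ t : ↥T → V,
      (if restr h2 t = z then ∑ w : ↥S → V, if restr h1 w = t then p w else 0 else 0)
      = ∑ w : ↥S → V, if restr h1 w = t then (if restr h2 t = z then p w else 0) else 0 := by
    intro t
    split_ifs with hh
    · simp [hh]
    · simp [hh]
  rw [Finset.sum_congr rfl (fun t _ => key t), Finset.sum_comm]
  apply Finset.sum_congr rfl
  intro w _
  rw [Finset.sum_ite_eq]
  simp only [Finset.mem_univ, if_true]
  rfl

lemma marg_subsingleton {S T : Finset ι} (h : T ⊆ S) (p : (↥S → V) → ℝ)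
    [Subsingleton (↥T → V)] (z : ↥T → V) : marg p h z = ∑ w, p w := by
  unfold marg
  apply Finset.sum_congr rfl
  intro w _
  rw [if_pos (Subsingleton.elim _ _)]

lemma sum_glue_cross {U A B X : Finset ι} (hA : A ⊆ U) (hB : B ⊆ U)
    (hX1 : X ⊆ A) (hX2 : X ⊆ B) (hABX : ∀ x, x ∈ A → x ∈ B → x ∈ X)
    (hD : U \ B = A \ X) (f : (↥A → V) → ℝ) (z : ↥B → V) :
    ∑ u : ↥(U \ B) → V, f (restr hA (glue hB z u)) =
      ∑ v : ↥(A \ X) → V, f (glue hX1 (restr hX2 z) v) := by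
  refine Fintype.sum_equiv
    (Equiv.arrowCongr (Equiv.subtypeEquivRight (fun x => by rw [hD])) (Equiv.refl V)) _ _ ?_
  intro u
  congr 1
  funext x
  by_cases hx : x.1 ∈ B
  · have hxX : x.1 ∈ X := hABX _ x.2 hx
    simp [restr, glue, hx, hxX]
  · have hxX : x.1 ∉ X := fun hh => hx (hX2 hh)
    simp only [restr, glue, hx, hxX, dif_neg, not_false_iff, Equiv.arrowCongr_apply,
      Function.comp_apply, Equiv.refl_apply, Equiv.subtypeEquivRight_symm_apply]
/-- The running intersection property for the ordered edge list `E 0, …, E (n-1)`. -/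
def RIP {n : ℕ} (E : Fin n → Finset ι) : Prop :=
  ∀ i : Fin n, 0 < (i : ℕ) →
    ∃ j : Fin n, j < i ∧
      E i ∩ ((Finset.univ.filter (fun k : Fin n => k < i)).biUnion E) ⊆ E j

set_option maxHeartbeats 1000000 in
/-- **Vorob'ev's theorem.** If a hypergraph with hyperedges `E_1,…,E_n` has the running
intersection property with respect to this ordering, and pairwise-consistent marginal
probability distributions `P_i` are given on each `E_i`, then there exists a joint
probability distribution on `E_1 ∪ … ∪ E_n` whose marginal on each `E_i` equals `P_i`. -/
theorem vorobev_extension {n : ℕ} (E : Fin n → Finset ι) (hRIP : RIP E)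
    (P : (i : Fin n) → ((↥(E i) → V) → ℝ))
    (h0 : ∀ i w, 0 ≤ P i w) (h1 : ∀ i, ∑ w, P i w = 1)
    (hcons : ∀ i j : Fin n,
      marg (P i) (inter_subset_left : E i ∩ E j ⊆ E i) =
      marg (P j) (inter_subset_right : E i ∩ E j ⊆ E j)) :
    ∃ Q : (↥(Finset.univ.biUnion E) → V) → ℝ,
      (∀ w, 0 ≤ Q w) ∧ (∑ w, Q w = 1) ∧
      ∀ i : Fin n,
        marg Q (Finset.subset_biUnion_of_mem E (Finset.mem_univ i)) = P i := by
  classical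
  have key : ∀ k, k ≤ n → ∀ T : Finset ι,
      T = (Finset.univ.filter (fun j : Fin n => (j : ℕ) < k)).biUnion E →
      ∃ Q : (↥T → V) → ℝ, (∀ w, 0 ≤ Q w) ∧ (∑ w, Q w = 1) ∧
        ∀ i : Fin n, (i : ℕ) < k → ∀ h : E i ⊆ T, marg Q h = P i := by
    intro k
    induction k with
    | zero =>
      intro _ T hT
      have hT0 : T = ∅ := by simp [hT]
      subst hT0
      haveI : IsEmpty (↥(∅ : Finset ι)) := by
        constructor; rintro ⟨x, hx⟩; simp at hx
      refine ⟨fun _ => 1, fun _ => zero_le_one, ?_, ?_⟩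
      · simp
      · intro i hi
        exact absurd hi (Nat.not_lt_zero _)
    | succ k ih =>
      intro hk T hT
      have hkn : k < n := hk
      set i : Fin n := ⟨k, hkn⟩ with hidef
      set T' : Finset ι := (Finset.univ.filter (fun j : Fin n => (j : ℕ) < k)).biUnion E
        with hT'def
      obtain ⟨Q', hQ'0, hQ'1, hQ'm⟩ := ih (le_of_lt hkn) T' rfl
      have hTT' : T = T' ∪ E i := by
        rw [hT]
        ext x
        simp only [hT'def, Finset.mem_biUnion, Finset.mem_filter, Finset.mem_univ, true_and,
          Finset.mem_union]
        constructor
        · rintro ⟨j, hj, hx⟩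
          rcases Nat.lt_succ_iff_lt_or_eq.1 hj with h | h
          · exact Or.inl ⟨j, h, hx⟩
          · right; have hji : j = i := Fin.ext h; rwa [hji] at hx
        · rintro (⟨j, hj, hx⟩ | hx)
          · exact ⟨j, Nat.lt_succ_of_lt hj, hx⟩
          · exact ⟨i, Nat.lt_succ_self k, hx⟩
      have hT'T : T' ⊆ T := by rw [hTT']; exact Finset.subset_union_left
      have hET : E i ⊆ T := by rw [hTT']; exact Finset.subset_union_right
      set S : Finset ι := E i ∩ T' with hSdef
      have hSE : S ⊆ E i := Finset.inter_subset_left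
      have hST' : S ⊆ T' := Finset.inter_subset_right
      have hST : S ⊆ T := hST'.trans hT'T
      -- the crucial marginal identity, via RIP (or triviality when k = 0)
      have hmarg : ∀ (X : Finset ι) (hx1 : X ⊆ T') (hx2 : X ⊆ E i),
          marg Q' hx1 = marg (P i) hx2 := by
        intro X hx1 hx2
        rcases Nat.eq_zero_or_pos k with hk0 | hk0
        · haveI : IsEmpty (↥X) := by
            constructor
            rintro ⟨x, hx⟩
            have := hx1 hx
            rw [hT'def] at this
            simp [hk0] at this
          funext z
          rw [marg_subsingleton, marg_subsingleton, hQ'1, h1 i]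
        · obtain ⟨j, hji, hsub⟩ := hRIP i hk0
          have hfilter : (Finset.univ.filter (fun k' : Fin n => k' < i)) =
              Finset.univ.filter (fun j' : Fin n => (j' : ℕ) < k) := by
            ext j'
            simp only [Finset.mem_filter, Finset.mem_univ, true_and]
            exact Fin.lt_def
          rw [hfilter] at hsub
          have hjval : (j : ℕ) < k := hji
          have hEjT' : E j ⊆ T' :=
            Finset.subset_biUnion_of_mem E (by simp [hjval])
          have hXS : X ⊆ S := Finset.subset_inter hx2 hx1
          have hXEj : X ⊆ E j := hXS.trans hsub
          have hXij : X ⊆ E i ∩ E j := Finset.subset_inter hx2 hXEj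
          calc marg Q' hx1 = marg (marg Q' hEjT') hXEj := (marg_comp hEjT' hXEj Q').symm
            _ = marg (P j) hXEj := by rw [hQ'm j hjval hEjT']
            _ = marg (marg (P j) (inter_subset_right : E i ∩ E j ⊆ E j)) hXij :=
                (marg_comp _ hXij (P j)).symm
            _ = marg (marg (P i) (inter_subset_left : E i ∩ E j ⊆ E i)) hXij := by
                rw [hcons i j]
            _ = marg (P i) hx2 := marg_comp _ hXij (P i)
      set m : (↥S → V) → ℝ := marg (P i) hSE with hmdef
      have hm0 : ∀ z, 0 ≤ m z := fun z => marg_nonneg hSE (h0 i) z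
      set Q : (↥T → V) → ℝ := fun w =>
        if m (restr hST w) = 0 then 0
        else Q' (restr hT'T w) * P i (restr hET w) / m (restr hST w) with hQdef
      have hQ0 : ∀ w, 0 ≤ Q w := by
        intro w
        rw [hQdef]
        dsimp only
        split
        · exact le_refl 0
        · exact div_nonneg (mul_nonneg (hQ'0 _) (h0 i _)) (hm0 _)
      have hDb : T \ T' = E i \ S := by
        ext x
        simp only [hTT', hSdef, Finset.mem_sdiff, Finset.mem_union, Finset.mem_inter]
        tauto
      have hDc : T \ E i = T' \ S := by
        ext x
        simp only [hTT', hSdef, Finset.mem_sdiff, Finset.mem_union, Finset.mem_inter]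
        tauto
      -- marginal on T' is Q'
      have hmargT' : marg Q hT'T = Q' := by
        funext z
        rw [marg_eq_sum_glue]
        by_cases hz : m (restr hST' z) = 0
        · have hterm : ∀ u, Q (glue hT'T z u) = 0 := by
            intro u
            have hr : restr hST (glue hT'T z u) = restr hST' z :=
              restr_glue_subset hT'T hST' hST z u
            rw [hQdef]
            dsimp only
            rw [hr, if_pos hz]
          rw [Finset.sum_eq_zero (fun u _ => hterm u)]
          have hle := le_marg hST' Q' hQ'0 z
          rw [hmarg S hST' hSE] at hle
          have := hQ'0 z
          rw [hmdef] at hz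
          linarith [hle, hz ▸ hle]
        · have hterm : ∀ u, Q (glue hT'T z u) =
              Q' z * P i (restr hET (glue hT'T z u)) / m (restr hST' z) := by
            intro u
            rw [hQdef]
            dsimp only
            rw [restr_glue_subset hT'T hST' hST, if_neg hz,
              restr_glue_subset hT'T (Finset.Subset.refl T') hT'T, restr_refl]
          rw [Finset.sum_congr rfl (fun u _ => hterm u)]
          have hcross := sum_glue_cross hET hT'T hSE hST'
            (fun x hx hx' => Finset.mem_inter.2 ⟨hx, hx'⟩) hDb (P i) z
          rw [← marg_eq_sum_glue hSE (P i) (restr hST' z)] at hcross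
          have : ∑ u : ↥(T \ T') → V,
              Q' z * P i (restr hET (glue hT'T z u)) / m (restr hST' z)
              = Q' z * (∑ u : ↥(T \ T') → V, P i (restr hET (glue hT'T z u)))
                / m (restr hST' z) := by
            rw [Finset.mul_sum, Finset.sum_div]
          rw [this, hcross]
          have hmz : m (restr hST' z) = marg (P i) hSE (restr hST' z) := by rw [hmdef]
          rw [← hmz]
          field_simp
      -- marginal on E i is P i
      have hmargE : marg Q hET = P i := by
        funext y
        rw [marg_eq_sum_glue]
        by_cases hy : m (restr hSE y) = 0
        · have hterm : ∀ u, Q (glue hET y u) = 0 := by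
            intro u
            have hr : restr hST (glue hET y u) = restr hSE y :=
              restr_glue_subset hET hSE hST y u
            rw [hQdef]
            dsimp only
            rw [hr, if_pos hy]
          rw [Finset.sum_eq_zero (fun u _ => hterm u)]
          have hle := le_marg hSE (P i) (h0 i) y
          rw [hmdef] at hy
          rw [hy] at hle
          linarith [h0 i y]
        · have hterm : ∀ u, Q (glue hET y u) =
              Q' (restr hT'T (glue hET y u)) * P i y / m (restr hSE y) := by
            intro u
            rw [hQdef]
            dsimp only
            rw [restr_glue_subset hET hSE hST, if_neg hy,
              restr_glue_subset hET (Finset.Subset.refl (E i)) hET, restr_refl]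
          rw [Finset.sum_congr rfl (fun u _ => hterm u)]
          have hcross := sum_glue_cross hT'T hET hST' hSE
            (fun x hx hx' => Finset.mem_inter.2 ⟨hx', hx⟩) hDc Q' y
          rw [← marg_eq_sum_glue hST' Q' (restr hSE y)] at hcross
          have : ∑ u : ↥(T \ E i) → V,
              Q' (restr hT'T (glue hET y u)) * P i y / m (restr hSE y)
              = (∑ u : ↥(T \ E i) → V, Q' (restr hT'T (glue hET y u)))
                * P i y / m (restr hSE y) := by
            rw [Finset.sum_mul, Finset.sum_div]
          rw [this, hcross, hmarg S hST' hSE]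
          have hmy : marg (P i) hSE (restr hSE y) = m (restr hSE y) := by rw [hmdef]
          rw [hmy]
          field_simp
      refine ⟨Q, hQ0, ?_, ?_⟩
      · rw [← sum_marg hT'T Q, hmargT', hQ'1]
      · intro i' hi' h
        rcases Nat.lt_succ_iff_lt_or_eq.1 hi' with hlt | heq
        · have hE'T' : E i' ⊆ T' :=
            Finset.subset_biUnion_of_mem E (by simp [hlt])
          have hcomp : marg Q h = marg (marg Q hT'T) hE'T' := (marg_comp hT'T hE'T' Q).symm
          rw [hcomp, hmargT', hQ'm i' hlt hE'T']
        · have : i' = i := Fin.ext heq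
          subst this
          exact hmargE
  obtain ⟨Q, hq0, hq1, hqm⟩ := key n le_rfl (Finset.univ.biUnion E)
    (by ext x; simp [Fin.is_lt])
  exact ⟨Q, hq0, hq1, fun i => hqm i i.is_lt _⟩
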